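/- Let B satisfy the three border conditions, and define O = { t : t ∉ B and ∃ t' ∈ B with t | t' }. Then O is an order ideal (closed under divisors). -/

import Mathlib

namespace BBD

open Finsupp

variable {σ : Type*}

/-- `t'` is a child of `t`: `t' · y = t` for some variable `y`. -/
def isChild (t' t : σ →₀ ℕ) : Prop := ∃ y : σ, t' + Finsupp.single y 1 = t

/-- The set of children of a monomial `t`. -/
def children (t : σ →₀ ℕ) : Set (σ →₀ ℕ) := {t' | isChild t' t}

/-- The children of a set of monomials. -/
def childrenSet (S : Set (σ →₀ ℕ)) : Set (σ →₀ ℕ) := ⋃ s ∈ S, children s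

/-- The set of parents of a monomial `t`. -/
def parents (t : σ →₀ ℕ) : Set (σ →₀ ℕ) := {t' | isChild t t'}

/-- An order ideal: a nonempty finite set of monomials closed under divisibility. -/
def IsOrderIdeal (O : Set (σ →₀ ℕ)) : Prop :=
  O.Finite ∧ O.Nonempty ∧ ∀ t ∈ O, ∀ t', t' ≤ t → t' ∈ O

/-- The border of a set of monomials: `(T₁ · O) \ O`. -/
def borderOf (O : Set (σ →₀ ℕ)) : Set (σ →₀ ℕ) :=
  {t | t ∉ O ∧ ∃ t' ∈ O, ∃ y : σ, t = t' + Finsupp.single y 1}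


theorem constructed_O_isOrderIdeal [Fintype σ] (B : Set (σ →₀ ℕ)) (hfin : B.Finite) (hne : B.Nonempty)
    (h1 : ∀ t ∈ B, ∀ x y : σ, Finsupp.single x 1 ≤ t → y ≠ x →
      (t + Finsupp.single y 1 ∈ B ∨ t + Finsupp.single y 1 - Finsupp.single x 1 ∈ B ∨
        t - Finsupp.single x 1 ∈ B))
    (h2 : ∀ t ∈ B, ∃ x : σ, Finsupp.single x 1 ≤ t ∧ t - Finsupp.single x 1 ∉ B)
    (h3 : ∀ t ∈ B, ∀ t1 t2 : σ →₀ ℕ, t1 ∈ B → t1 ≤ t2 → t2 ≤ t → t2 ∈ B) :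
    IsOrderIdeal {t : σ →₀ ℕ | t ∉ B ∧ ∃ t' ∈ B, t ≤ t'} := by
  classical
  refine ⟨?_, ?_, ?_⟩
  · have : {t : σ →₀ ℕ | t ∉ B ∧ ∃ t' ∈ B, t ≤ t'} ⊆ ⋃ t' ∈ B, Set.Iic t' := by
      rintro t ⟨-, t', ht', hle⟩
      exact Set.mem_biUnion ht' hle
    exact Set.Finite.subset (Set.Finite.biUnion hfin fun t' _ => Set.finite_Iic t') this
  · obtain ⟨b, hb⟩ := hne
    refine ⟨0, ?_, b, hb, zero_le⟩
    intro h0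
    obtain ⟨x, hx, -⟩ := h2 0 h0
    have := hx x
    simp [Finsupp.single_apply] at this
  · rintro t ⟨htB, t', ht'B, hle⟩ s hst
    refine ⟨fun hsB => htB (h3 t' ht'B s t hsB hst hle), t', ht'B, hst.trans hle⟩

end BBD
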